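/- Let V be an affine Δ-algebraic variety over K, let F be a Δ-field extension of K, and let a ∈ V(F). Then the set of local Δ-derivations at a extending D is in natural bijection with the set of solutions b ∈ F^n of the system { d_{D/Δ}f_a(u) = 0 : f ∈ I(V/K)_Δ }; explicitly, every such solution b gives the local Δ-derivation ξ_b(f) = d_{D/Δ}f_a(b), and every local Δ-derivation ξ at a extending D yields the solution (ξ(x̄₁),...,ξ(x̄_n)). -/

import Mathlib

set_option linter.unusedSectionVars false
set_option maxHeartbeats 1000000


/- Formal framework for relative differential algebra:
   Δ-polynomial rings, relative differentials d_{D/Δ}, prolongations. -/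

open MvPolynomial

/-- Multi-indices of derivative operators (the monoid Θ_Δ). -/
abbrev Theta (ι : Type*) := ι →₀ ℕ

/-- Variables `θ x_k` of the Δ-polynomial ring in indeterminates indexed by `κ`. -/
abbrev DVar (κ ι : Type*) := κ × Theta ι

/-- The Δ-polynomial ring `K{x_k : k ∈ κ}_Δ`. -/
abbrev DPoly (K : Type*) [CommRing K] (κ ι : Type*) := MvPolynomial (DVar κ ι) K

variable {K : Type*} [CommRing K] {κ ι : Type*} [DecidableEq κ] [DecidableEq ι]

/-- Apply a multi-index `θ` of operators from the family `δ` to `a`. -/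
noncomputable def thetaApply {A : Type*} (δ : ι → A → A) (θ : Theta ι) (a : A) : A :=
  ((θ.support.toList.map fun j => (δ j)^[θ j]).foldr (· ∘ ·) id) a

section ThetaLemmas

variable {A B : Type*}

/-- view an endofunction as an element of the endomorphism monoid -/
def toE (f : A → A) : Function.End A := f

lemma toE_mul (f g : A → A) : toE f * toE g = toE (f ∘ g) := rfl

lemma toE_apply (f : A → A) (x : A) : toE f x = f x := rfl

lemma end_commute {f g : A → A} (h : ∀ x, f (g x) = g (f x)) :
    Commute (toE f) (toE g) := by
  show toE f * toE g = toE g * toE f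
  rw [toE_mul, toE_mul]
  exact congrArg toE (funext h)

lemma thetaApply_zero (δ : ι → A → A) (x : A) : thetaApply δ 0 x = x := by
  simp [thetaApply]

lemma thetaApply_eq_prod (δ : ι → A → A) (θ : Theta ι) (x : A) :
    thetaApply δ θ x = ((θ.support.toList.map fun j => toE ((δ j)^[θ j])).prod) x := by
  unfold thetaApply
  induction θ.support.toList with
  | nil => rfl
  | cons i t ih =>
    simp only [List.map_cons, List.foldr_cons, List.prod_cons, Function.comp_apply]
    rw [ih]
    rfl

/-- pull a commuting factor out of a list product -/
lemma prod_pull {M : Type*} [Monoid M] (g f' : ι → M) (d : M) (j : ι)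
    (h1 : f' j = d * g j) (h2 : ∀ i, i ≠ j → f' i = g i) (hcm : ∀ i, Commute d (g i)) :
    ∀ l : List ι, l.Nodup → j ∈ l → (l.map f').prod = d * (l.map g).prod := by
  intro l
  induction l with
  | nil => simp
  | cons h t ih =>
    intro hnd hj
    rcases List.nodup_cons.mp hnd with ⟨hht, hndt⟩
    by_cases hhj : h = j
    · subst hhj
      have : t.map f' = t.map g := by
        apply List.map_congr_left
        intro i hi
        exact h2 i (fun hij => hht (hij ▸ hi))
      simp [this, h1, mul_assoc]
    · have hjt : j ∈ t := by
        rcases List.mem_cons.mp hj with h' | h'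
        · exact absurd h'.symm hhj
        · exact h'
      have := ih hndt hjt
      simp only [List.map_cons, List.prod_cons, this, h2 h hhj]
      rw [← mul_assoc, ← (hcm h).eq, mul_assoc]

lemma support_add_single (θ : Theta ι) (j : ι) :
    (θ + Finsupp.single j 1).support = insert j θ.support := by
  ext i
  rcases eq_or_ne i j with h | h
  · subst h
    simp [Finsupp.mem_support_iff, Finsupp.add_apply, Finsupp.single_eq_same]
  · simp [Finsupp.mem_support_iff, Finsupp.add_apply,
      Finsupp.single_eq_of_ne (Ne.symm h), h]

lemma add_single_apply_ne (θ : Theta ι) {i j : ι} (h : i ≠ j) :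
    (θ + Finsupp.single j 1 : Theta ι) i = θ i := by
  rw [Finsupp.add_apply, Finsupp.single_eq_of_ne' (Ne.symm h), add_zero]

lemma add_single_apply_self (θ : Theta ι) (j : ι) :
    (θ + Finsupp.single j 1 : Theta ι) j = θ j + 1 := by
  rw [Finsupp.add_apply, Finsupp.single_eq_same]

/-- Key: applying `θ + e_j` equals `δ j` after applying `θ`, for a commuting family. -/
lemma thetaApply_add_single (δ : ι → A → A)
    (hc : ∀ i j x, δ i (δ j x) = δ j (δ i x)) (θ : Theta ι) (j : ι) (x : A) :
    thetaApply δ (θ + Finsupp.single j 1) x = δ j (thetaApply δ θ x) := by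
  classical
  have hcomm : ∀ i i' : ι, ∀ m m' : ℕ,
      Commute (toE ((δ i)^[m])) (toE ((δ i')^[m'])) := by
    intro i i' m m'
    have hfc : Function.Commute (δ i) (δ i') := fun y => hc i i' y
    exact end_commute fun y => hfc.iterate_iterate m m' y
  let g : ι → Function.End A := fun i => toE ((δ i)^[θ i])
  let f' : ι → Function.End A := fun i => toE ((δ i)^[(θ + Finsupp.single j 1 : Theta ι) i])
  have hcmd : ∀ i, Commute (toE (δ j)) (g i) := by
    intro i
    have := hcomm j i 1 (θ i)
    rwa [Function.iterate_one] at this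
  have h2 : ∀ i, i ≠ j → f' i = g i := by
    intro i hij
    show toE _ = toE _
    rw [add_single_apply_ne θ hij]
  have h1 : f' j = toE (δ j) * g j := by
    show toE _ = _
    rw [add_single_apply_self, toE_mul]
    exact congrArg toE (Function.iterate_succ' (δ j) (θ j))
  rw [thetaApply_eq_prod, thetaApply_eq_prod, support_add_single]
  by_cases hjs : j ∈ θ.support
  · rw [Finset.insert_eq_self.mpr hjs]
    have hnd : θ.support.toList.Nodup := Finset.nodup_toList _
    have hjl : j ∈ θ.support.toList := by rwa [Finset.mem_toList]
    have hpull := prod_pull g f' (toE (δ j)) j h1 h2 hcmd θ.support.toList hnd hjl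
    show ((θ.support.toList.map f').prod) x = δ j (((θ.support.toList.map g).prod) x)
    rw [hpull]
    rfl
  · have hperm : (insert j θ.support).toList.Perm (j :: θ.support.toList) :=
      Finset.toList_insert hjs
    have hpc : ((insert j θ.support).toList.map f').Pairwise Commute := by
      apply List.pairwise_of_forall_mem_list
      intro u hu v hv
      rcases List.mem_map.mp hu with ⟨i, _, rfl⟩
      rcases List.mem_map.mp hv with ⟨i', _, rfl⟩
      exact hcomm i i' _ _
    have hprodeq : ((insert j θ.support).toList.map f').prod
        = ((j :: θ.support.toList).map f').prod :=
      (hperm.map f').prod_eq' hpc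
    have hmapeq : θ.support.toList.map f' = θ.support.toList.map g := by
      apply List.map_congr_left
      intro i hi
      exact h2 i (fun hij => hjs (hij ▸ (Finset.mem_toList.mp hi)))
    have hfj : f' j = toE (δ j) := by
      have hθj : θ j = 0 := by rwa [← Finsupp.notMem_support_iff]
      show toE _ = toE _
      rw [add_single_apply_self, hθj]
      exact congrArg toE (Function.iterate_one (δ j))
    show (((insert j θ.support).toList.map f').prod) x
      = δ j (((θ.support.toList.map g).prod) x)
    rw [hprodeq, List.map_cons, List.prod_cons, hfj, hmapeq]
    rfl

/-- intertwining maps commute with `thetaApply`. -/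
lemma thetaApply_intertwine (ξ : A → B) (gA : ι → A → A) (gB : ι → B → B)
    (h : ∀ j x, ξ (gA j x) = gB j (ξ x)) (θ : Theta ι) (x : A) :
    ξ (thetaApply gA θ x) = thetaApply gB θ (ξ x) := by
  unfold thetaApply
  induction θ.support.toList with
  | nil => simp
  | cons i t ih =>
    simp only [List.map_cons, List.foldr_cons, Function.comp_apply]
    have hsc : Function.Semiconj ξ ((gA i)^[θ i]) ((gB i)^[θ i]) :=
      Function.Semiconj.iterate_right (fun y => h i y) (θ i)
    rw [hsc _, ih]

end ThetaLemmas

/-- Apply a map `D` to all coefficients of a polynomial (`f ↦ f^D`). -/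
noncomputable def mapCoeff {σ : Type*} (D : K → K) (f : MvPolynomial σ K) :
    MvPolynomial σ K :=
  (AddMonoidAlgebra.coeff f).sum fun m c => monomial m (D c)

/-- Evaluation of a Δ-polynomial over `K` at a point `a` of a differential ring `A`
(with derivations `δA`) along the ring homomorphism `φ : K →+* A`. -/
noncomputable def devalAt {A : Type*} [CommRing A] (φ : K →+* A)
    (δA : ι → A → A) (a : κ → A) (f : DPoly K κ ι) : A :=
  eval₂ φ (fun v => thetaApply δA v.2 (a v.1)) f

/-- The relative differential `d_{D/Δ} f` of a Δ-polynomial, as a polynomial in the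
doubled set of variables (`Sum.inl` = the x-variables, `Sum.inr` = the u-variables):
`d_{D/Δ}f(x,u) = Σ_{θ,k} ∂f/∂(θx_k) · θu_k + f^D(x)`. -/
noncomputable def dRel (D : K → K) (f : DPoly K κ ι) :
    MvPolynomial (DVar κ ι ⊕ DVar κ ι) K :=
  (∑ v ∈ f.vars, (rename Sum.inl (pderiv v f)) * X (Sum.inr v))
    + rename Sum.inl (mapCoeff D f)

/-- Evaluation of the relative differential `d_{D/Δ}f` at the pair of points `(a, b)`. -/
noncomputable def dRelEval {A : Type*} [CommRing A] (φ : K →+* A)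
    (δA : ι → A → A) (D : K → K) (a b : κ → A) (f : DPoly K κ ι) : A :=
  eval₂ φ
    (Sum.elim (fun v => thetaApply δA v.2 (a v.1)) (fun v => thetaApply δA v.2 (b v.1)))
    (dRel D f)

/-- The canonical action of the derivation `δ_j` on the Δ-polynomial ring:
it acts on coefficients via `δK j` and shifts the variables `θx_k ↦ (δ_j θ)x_k`. -/
noncomputable def polyDeriv (δK : ι → K → K) (j : ι) (f : DPoly K κ ι) : DPoly K κ ι :=
  mapCoeff (δK j) f + ∑ v ∈ f.vars, pderiv v f * X (v.1, v.2 + Finsupp.single j 1)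

section MapCoeff

variable {D : K → K} {σ : Type*}

lemma mapCoeff_monomial (hD0 : D 0 = 0) (m : σ →₀ ℕ) (c : K) :
    mapCoeff D (monomial m c) = monomial m (D c) := by
  unfold mapCoeff
  rw [← single_eq_monomial, AddMonoidAlgebra.coeff_single]
  exact Finsupp.sum_single_index (by rw [hD0, monomial_zero])

lemma mapCoeff_C (hD0 : D 0 = 0) (c : K) :
    mapCoeff D (C c : MvPolynomial σ K) = C (D c) := by
  rw [C_apply, mapCoeff_monomial hD0, C_apply]

lemma mapCoeff_add (hD0 : D 0 = 0) (hDadd : ∀ x y, D (x + y) = D x + D y)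
    (f g : MvPolynomial σ K) :
    mapCoeff D (f + g) = mapCoeff D f + mapCoeff D g := by
  unfold mapCoeff
  rw [AddMonoidAlgebra.coeff_add]
  exact Finsupp.sum_add_index' (fun m => by rw [hD0, monomial_zero])
    (fun m c₁ c₂ => by rw [hDadd, map_add])

lemma mapCoeff_mul (hD0 : D 0 = 0) (hDadd : ∀ x y, D (x + y) = D x + D y)
    (hDmul : ∀ x y, D (x * y) = x * D y + D x * y) (f g : MvPolynomial σ K) :
    mapCoeff D (f * g) = mapCoeff D f * g + f * mapCoeff D g := by
  induction f using MvPolynomial.induction_on' with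
  | add p q hp hq =>
    rw [add_mul, mapCoeff_add hD0 hDadd, hp, hq, mapCoeff_add hD0 hDadd]
    ring
  | monomial u a =>
    induction g using MvPolynomial.induction_on' with
    | add p q hp hq =>
      rw [mul_add, mapCoeff_add hD0 hDadd, hp, hq, mapCoeff_add hD0 hDadd]
      ring
    | monomial v b =>
      rw [monomial_mul, mapCoeff_monomial hD0, mapCoeff_monomial hD0,
        mapCoeff_monomial hD0, monomial_mul, monomial_mul, hDmul, map_add, add_comm]

lemma mapCoeff_X (hD0 : D 0 = 0) (hD1 : D 1 = 0) (v : σ) :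
    mapCoeff D (X v : MvPolynomial σ K) = 0 := by
  rw [show (X v : MvPolynomial σ K) = monomial (Finsupp.single v 1) 1 from rfl,
    mapCoeff_monomial hD0, hD1, monomial_zero]

end MapCoeff

section SumVars

lemma sum_vars_subset {σ M : Type*} [DecidableEq σ] [AddCommMonoid M]
    (f : MvPolynomial σ K) {s : Finset σ} (hs : f.vars ⊆ s)
    (t : σ → MvPolynomial σ K → M) (h0 : ∀ v, t v 0 = 0) :
    ∑ v ∈ f.vars, t v (pderiv v f) = ∑ v ∈ s, t v (pderiv v f) :=
  Finset.sum_subset hs (fun v _ hv => by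
    rw [pderiv_eq_zero_of_notMem_vars hv]; exact h0 v)

end SumVars

section PolyDeriv

variable {δK : ι → K → K} {j : ι}

lemma polyDeriv_C (hδ0 : δK j 0 = 0) (c : K) :
    polyDeriv δK j (C c : DPoly K κ ι) = C (δK j c) := by
  unfold polyDeriv
  rw [vars_C, mapCoeff_C hδ0]
  simp

lemma polyDeriv_X [Nontrivial K] (hδ0 : δK j 0 = 0) (hδ1 : δK j 1 = 0) (v : DVar κ ι) :
    polyDeriv δK j (X v : DPoly K κ ι) = X (v.1, v.2 + Finsupp.single j 1) := by
  unfold polyDeriv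
  rw [vars_X, mapCoeff_X hδ0 hδ1]
  simp [pderiv_X_self]

lemma polyDeriv_add (hδ0 : δK j 0 = 0) (hδadd : ∀ x y, δK j (x + y) = δK j x + δK j y)
    (f g : DPoly K κ ι) :
    polyDeriv δK j (f + g) = polyDeriv δK j f + polyDeriv δK j g := by
  unfold polyDeriv
  set s := (f + g).vars ∪ (f.vars ∪ g.vars) with hs
  have h0 : ∀ v : DVar κ ι, (0 : DPoly K κ ι) * X (v.1, v.2 + Finsupp.single j 1) = 0 :=
    fun v => zero_mul _
  rw [sum_vars_subset (f + g) (Finset.subset_union_left)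
      (fun v p => p * X (v.1, v.2 + Finsupp.single j 1)) h0,
    sum_vars_subset f (Finset.subset_union_left.trans Finset.subset_union_right)
      (fun v p => p * X (v.1, v.2 + Finsupp.single j 1)) h0,
    sum_vars_subset g (Finset.subset_union_right.trans Finset.subset_union_right)
      (fun v p => p * X (v.1, v.2 + Finsupp.single j 1)) h0,
    mapCoeff_add hδ0 hδadd]
  have : ∑ v ∈ s, pderiv v (f + g) * X (v.1, v.2 + Finsupp.single j 1)
      = ∑ v ∈ s, pderiv v f * X (v.1, v.2 + Finsupp.single j 1)
        + ∑ v ∈ s, pderiv v g * X (v.1, v.2 + Finsupp.single j 1) := by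
    rw [← Finset.sum_add_distrib]
    exact Finset.sum_congr rfl (fun v _ => by rw [map_add, add_mul])
  rw [this]
  ring

lemma polyDeriv_mul (hδ0 : δK j 0 = 0) (hδadd : ∀ x y, δK j (x + y) = δK j x + δK j y)
    (hδmul : ∀ x y, δK j (x * y) = x * δK j y + δK j x * y) (f g : DPoly K κ ι) :
    polyDeriv δK j (f * g) = polyDeriv δK j f * g + f * polyDeriv δK j g := by
  unfold polyDeriv
  set s := (f * g).vars ∪ (f.vars ∪ g.vars) with hs
  have h0 : ∀ v : DVar κ ι, (0 : DPoly K κ ι) * X (v.1, v.2 + Finsupp.single j 1) = 0 :=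
    fun v => zero_mul _
  rw [sum_vars_subset (f * g) (Finset.subset_union_left)
      (fun v p => p * X (v.1, v.2 + Finsupp.single j 1)) h0,
    sum_vars_subset f (Finset.subset_union_left.trans Finset.subset_union_right)
      (fun v p => p * X (v.1, v.2 + Finsupp.single j 1)) h0,
    sum_vars_subset g (Finset.subset_union_right.trans Finset.subset_union_right)
      (fun v p => p * X (v.1, v.2 + Finsupp.single j 1)) h0,
    mapCoeff_mul hδ0 hδadd hδmul]
  have : ∑ v ∈ s, pderiv v (f * g) * X (v.1, v.2 + Finsupp.single j 1)
      = (∑ v ∈ s, pderiv v f * X (v.1, v.2 + Finsupp.single j 1)) * g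
        + f * ∑ v ∈ s, pderiv v g * X (v.1, v.2 + Finsupp.single j 1) := by
    rw [Finset.sum_mul, Finset.mul_sum, ← Finset.sum_add_distrib]
    exact Finset.sum_congr rfl (fun v _ => by rw [pderiv_mul]; ring)
  rw [this]
  ring

end PolyDeriv

section DevalAt

variable {F : Type*} [CommRing F] (φ : K →+* F) (δF : ι → F → F) (a : κ → F)

lemma devalAt_C (c : K) : devalAt φ δF a (C c : DPoly K κ ι) = φ c := eval₂_C _ _ _

lemma devalAt_add (f g : DPoly K κ ι) :
    devalAt φ δF a (f + g) = devalAt φ δF a f + devalAt φ δF a g := eval₂_add _ _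

lemma devalAt_mul (f g : DPoly K κ ι) :
    devalAt φ δF a (f * g) = devalAt φ δF a f * devalAt φ δF a g := eval₂_mul _ _

lemma devalAt_zero : devalAt φ δF a (0 : DPoly K κ ι) = 0 := eval₂_zero _ _

lemma devalAt_one : devalAt φ δF a (1 : DPoly K κ ι) = 1 := eval₂_one _ _

lemma devalAt_X (v : DVar κ ι) :
    devalAt φ δF a (X v) = thetaApply δF v.2 (a v.1) := eval₂_X _ _ _

lemma devalAt_sum {s : Finset (DVar κ ι)} (t : DVar κ ι → DPoly K κ ι) :
    devalAt φ δF a (∑ v ∈ s, t v) = ∑ v ∈ s, devalAt φ δF a (t v) :=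
  map_sum (eval₂Hom φ (fun v : DVar κ ι => thetaApply δF v.2 (a v.1))) t s

/-- Evaluation at any point intertwines `polyDeriv δK j` with `δF j`. -/
lemma devalAt_polyDeriv [Nontrivial K] {δK : ι → K → K} {j : ι}
    (hδ0 : δK j 0 = 0) (hδ1 : δK j 1 = 0)
    (hδadd : ∀ x y, δK j (x + y) = δK j x + δK j y)
    (hδmul : ∀ x y, δK j (x * y) = x * δK j y + δK j x * y)
    (hFadd : ∀ x y, δF j (x + y) = δF j x + δF j y)
    (hFmul : ∀ x y, δF j (x * y) = x * δF j y + δF j x * y)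
    (hFcomm : ∀ i i' x, δF i (δF i' x) = δF i' (δF i x))
    (hFext : ∀ c, δF j (φ c) = φ (δK j c))
    (f : DPoly K κ ι) :
    devalAt φ δF a (polyDeriv δK j f) = δF j (devalAt φ δF a f) := by
  induction f using MvPolynomial.induction_on with
  | C c => rw [polyDeriv_C hδ0, devalAt_C, devalAt_C, hFext]
  | add p q hp hq =>
    rw [polyDeriv_add hδ0 hδadd, devalAt_add, hp, hq, devalAt_add, hFadd]
  | mul_X p v hp =>
    rw [polyDeriv_mul hδ0 hδadd hδmul, devalAt_add, devalAt_mul, devalAt_mul, hp,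
      polyDeriv_X hδ0 hδ1, devalAt_X, devalAt_X, devalAt_mul, devalAt_X, hFmul]
    show _ + _ * thetaApply δF (v.2 + Finsupp.single j 1) (a v.1) = _
    rw [thetaApply_add_single δF hFcomm]
    ring

end DevalAt

section DerivedZero

lemma deriv_zero_of_add {R : Type*} [AddCancelCommMonoid R] {D : R → R}
    (h : ∀ x y, D (x + y) = D x + D y) : D 0 = 0 := by
  have h0 := h 0 0
  rw [add_zero] at h0
  exact right_eq_add.mp h0

lemma deriv_one_of_mul {R : Type*} [CommRing R] {D : R → R}
    (h : ∀ x y, D (x * y) = x * D y + D x * y) : D 1 = 0 := by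
  have h1 := h 1 1
  rw [mul_one, one_mul, mul_one] at h1
  exact right_eq_add.mp h1

end DerivedZero

section DRelEval

variable {F : Type*} [CommRing F] (φ : K →+* F) (δF : ι → F → F) (D : K → K) (a b : κ → F)

lemma dRelEval_eq (f : DPoly K κ ι) {s : Finset (DVar κ ι)} (hs : f.vars ⊆ s) :
    dRelEval φ δF D a b f
      = (∑ v ∈ s, devalAt φ δF a (pderiv v f) * thetaApply δF v.2 (b v.1))
        + devalAt φ δF a (mapCoeff D f) := by
  unfold dRelEval dRel
  set G : DVar κ ι ⊕ DVar κ ι → F :=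
    Sum.elim (fun v => thetaApply δF v.2 (a v.1)) (fun v => thetaApply δF v.2 (b v.1))
    with hG
  rw [eval₂_add]
  have hren : ∀ p : DPoly K κ ι, eval₂ φ G (rename Sum.inl p) = devalAt φ δF a p := by
    intro p
    rw [eval₂_rename]
    rfl
  have hsum : eval₂ φ G (∑ v ∈ f.vars, rename Sum.inl (pderiv v f) * X (Sum.inr v))
      = ∑ v ∈ f.vars, devalAt φ δF a (pderiv v f) * thetaApply δF v.2 (b v.1) := by
    rw [show eval₂ φ G = ⇑(eval₂Hom φ G) from (coe_eval₂Hom φ G).symm, map_sum]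
    refine Finset.sum_congr rfl (fun v _ => ?_)
    rw [map_mul]
    simp only [coe_eval₂Hom]
    rw [hren, eval₂_X]
    rfl
  rw [hsum, hren]
  congr 1
  exact sum_vars_subset f hs
    (fun v p => devalAt φ δF a p * thetaApply δF v.2 (b v.1))
    (fun v => by simp [devalAt_zero])

variable {D}

lemma dRelEval_C (hD0 : D 0 = 0) (c : K) :
    dRelEval φ δF D a b (C c : DPoly K κ ι) = φ (D c) := by
  rw [dRelEval_eq φ δF D a b (C c) (s := ∅) (by rw [vars_C]),
    Finset.sum_empty, mapCoeff_C hD0, devalAt_C, zero_add]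

lemma dRelEval_X [Nontrivial K] (hD0 : D 0 = 0) (hD1 : D 1 = 0) (v : DVar κ ι) :
    dRelEval φ δF D a b (X v : DPoly K κ ι) = thetaApply δF v.2 (b v.1) := by
  rw [dRelEval_eq φ δF D a b (X v) (s := {v}) (by rw [vars_X]),
    Finset.sum_singleton, mapCoeff_X hD0 hD1, devalAt_zero, pderiv_X_self,
    devalAt_one, one_mul, add_zero]

lemma dRelEval_add (hD0 : D 0 = 0) (hDadd : ∀ x y, D (x + y) = D x + D y)
    (f g : DPoly K κ ι) :
    dRelEval φ δF D a b (f + g) = dRelEval φ δF D a b f + dRelEval φ δF D a b g := by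
  set s := (f + g).vars ∪ (f.vars ∪ g.vars) with hs
  rw [dRelEval_eq φ δF D a b (f + g) (s := s) Finset.subset_union_left,
    dRelEval_eq φ δF D a b f
      (s := s) (Finset.subset_union_left.trans Finset.subset_union_right),
    dRelEval_eq φ δF D a b g
      (s := s) (Finset.subset_union_right.trans Finset.subset_union_right),
    mapCoeff_add hD0 hDadd, devalAt_add]
  have : ∑ v ∈ s, devalAt φ δF a (pderiv v (f + g)) * thetaApply δF v.2 (b v.1)
      = ∑ v ∈ s, devalAt φ δF a (pderiv v f) * thetaApply δF v.2 (b v.1)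
        + ∑ v ∈ s, devalAt φ δF a (pderiv v g) * thetaApply δF v.2 (b v.1) := by
    rw [← Finset.sum_add_distrib]
    exact Finset.sum_congr rfl (fun v _ => by rw [map_add, devalAt_add, add_mul])
  rw [this]
  ring

lemma dRelEval_mul (hD0 : D 0 = 0) (hDadd : ∀ x y, D (x + y) = D x + D y)
    (hDmul : ∀ x y, D (x * y) = x * D y + D x * y) (f g : DPoly K κ ι) :
    dRelEval φ δF D a b (f * g)
      = dRelEval φ δF D a b f * devalAt φ δF a g
        + devalAt φ δF a f * dRelEval φ δF D a b g := by
  set s := (f * g).vars ∪ (f.vars ∪ g.vars) with hs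
  rw [dRelEval_eq φ δF D a b (f * g) (s := s) Finset.subset_union_left,
    dRelEval_eq φ δF D a b f
      (s := s) (Finset.subset_union_left.trans Finset.subset_union_right),
    dRelEval_eq φ δF D a b g
      (s := s) (Finset.subset_union_right.trans Finset.subset_union_right),
    mapCoeff_mul hD0 hDadd hDmul, devalAt_add, devalAt_mul, devalAt_mul]
  have : ∑ v ∈ s, devalAt φ δF a (pderiv v (f * g)) * thetaApply δF v.2 (b v.1)
      = (∑ v ∈ s, devalAt φ δF a (pderiv v f) * thetaApply δF v.2 (b v.1))
          * devalAt φ δF a g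
        + devalAt φ δF a f
          * ∑ v ∈ s, devalAt φ δF a (pderiv v g) * thetaApply δF v.2 (b v.1) := by
    rw [Finset.sum_mul, Finset.mul_sum, ← Finset.sum_add_distrib]
    exact Finset.sum_congr rfl (fun v _ => by
      rw [pderiv_mul, devalAt_add, devalAt_mul, devalAt_mul]; ring)
  rw [this]
  ring

lemma dRelEval_polyDeriv [Nontrivial K] {δK : ι → K → K} {j : ι}
    (hδ0 : δK j 0 = 0) (hδ1 : δK j 1 = 0)
    (hδadd : ∀ x y, δK j (x + y) = δK j x + δK j y)
    (hδmul : ∀ x y, δK j (x * y) = x * δK j y + δK j x * y)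
    (hD0 : D 0 = 0) (hDadd : ∀ x y, D (x + y) = D x + D y)
    (hDmul : ∀ x y, D (x * y) = x * D y + D x * y)
    (hDcomm' : ∀ c, D (δK j c) = δK j (D c))
    (hFadd : ∀ x y, δF j (x + y) = δF j x + δF j y)
    (hFmul : ∀ x y, δF j (x * y) = x * δF j y + δF j x * y)
    (hFcomm : ∀ i i' x, δF i (δF i' x) = δF i' (δF i x))
    (hFext : ∀ c, δF j (φ c) = φ (δK j c))
    (f : DPoly K κ ι) :
    dRelEval φ δF D a b (polyDeriv δK j f) = δF j (dRelEval φ δF D a b f) := by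
  induction f using MvPolynomial.induction_on with
  | C c =>
    rw [polyDeriv_C hδ0, dRelEval_C φ δF a b hD0, dRelEval_C φ δF a b hD0, hFext,
      hDcomm' c]
  | add p q hp hq =>
    rw [polyDeriv_add hδ0 hδadd, dRelEval_add φ δF a b hD0 hDadd, hp, hq,
      dRelEval_add φ δF a b hD0 hDadd, hFadd]
  | mul_X p v hp =>
    rw [polyDeriv_mul hδ0 hδadd hδmul, dRelEval_add φ δF a b hD0 hDadd,
      dRelEval_mul φ δF a b hD0 hDadd hDmul, hp, polyDeriv_X hδ0 hδ1,
      dRelEval_mul φ δF a b hD0 hDadd hDmul, dRelEval_mul φ δF a b hD0 hDadd hDmul,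
      dRelEval_X φ δF a b hD0 (deriv_one_of_mul hDmul),
      dRelEval_X φ δF a b hD0 (deriv_one_of_mul hDmul),
      devalAt_X, devalAt_X,
      devalAt_polyDeriv φ δF a hδ0 hδ1 hδadd hδmul hFadd hFmul hFcomm hFext]
    show δF j (dRelEval φ δF D a b p) * thetaApply δF v.2 (a v.1)
        + δF j (devalAt φ δF a p) * thetaApply δF v.2 (b v.1)
        + (dRelEval φ δF D a b p * thetaApply δF (v.2 + Finsupp.single j 1) (a v.1)
          + devalAt φ δF a p * thetaApply δF (v.2 + Finsupp.single j 1) (b v.1))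
        = δF j (dRelEval φ δF D a b p * thetaApply δF v.2 (a v.1)
          + devalAt φ δF a p * thetaApply δF v.2 (b v.1))
    rw [hFadd, hFmul, hFmul, thetaApply_add_single δF hFcomm,
      thetaApply_add_single δF hFcomm]
    ring

end DRelEval

section IterX

variable [Nontrivial K] {δK : ι → K → K}

lemma iterate_polyDeriv_X {j : ι} (hδ0 : δK j 0 = 0) (hδ1 : δK j 1 = 0)
    (n : ℕ) (k : κ) (η : Theta ι) :
    (polyDeriv δK j)^[n] (X (k, η) : DPoly K κ ι) = X (k, η + Finsupp.single j n) := by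
  induction n generalizing η with
  | zero => simp
  | succ n ih =>
    rw [Function.iterate_succ_apply, polyDeriv_X hδ0 hδ1, ih]
    congr 1
    rw [Prod.mk.injEq]
    refine ⟨rfl, ?_⟩
    rw [add_assoc]
    congr 1
    rw [← Finsupp.single_add, add_comm]

lemma thetaApply_polyDeriv_X (hδ0 : ∀ j, δK j 0 = 0) (hδ1 : ∀ j, δK j 1 = 0)
    (θ : Theta ι) (k : κ) :
    thetaApply (polyDeriv δK) θ (X (k, (0 : Theta ι)) : DPoly K κ ι) = X (k, θ) := by
  have key : ∀ (l : List ι), ∀ η : Theta ι,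
      ((l.map fun j => (polyDeriv δK j)^[θ j]).foldr (· ∘ ·) id)
          (X (k, η) : DPoly K κ ι)
        = X (k, η + (l.map fun i => Finsupp.single i (θ i)).sum) := by
    intro l
    induction l with
    | nil => intro η; simp
    | cons i t ih =>
      intro η
      simp only [List.map_cons, List.foldr_cons, Function.comp_apply, List.sum_cons]
      rw [ih η, iterate_polyDeriv_X (hδ0 i) (hδ1 i)]
      congr 2
      rw [add_assoc]
      congr 1
      rw [add_comm]
  unfold thetaApply
  rw [key θ.support.toList 0, zero_add]
  congr 1
  rw [Prod.mk.injEq]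
  refine ⟨rfl, ?_⟩
  rw [Finset.sum_map_toList θ.support (fun i => Finsupp.single i (θ i))]
  exact Finsupp.sum_single θ

end IterX

/-- Let `V` be an affine Δ-algebraic variety over `K` with defining
Δ-ideal `I`, `F` a Δ-field extension of `K`, and `a ∈ V(F)`.  Local Δ-derivations at
`a` extending `D` (described on the coordinate Δ-ring, i.e. as additive maps
`ξ : K{x}_Δ → F` vanishing on `I`, commuting with Δ, with the twisted Leibniz rule
and extending `D` on constants) are in natural bijection with the solutions
`b ∈ F^n` of the system `{d_{D/Δ}f_a(u) = 0 : f ∈ I}`: the solution `b` gives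
`ξ_b(f) = d_{D/Δ}f_a(b)`, and conversely `ξ` gives the solution `(ξ(x̄₁),…,ξ(x̄_n))`. -/
theorem local_derivations_biject_with_prolongation_fibre
    {K : Type*} [Field K] [CharZero K] {ℓ n : ℕ}
    (δ : Fin ℓ → K → K) (D : K → K)
    (hδadd : ∀ j x y, δ j (x + y) = δ j x + δ j y)
    (hδmul : ∀ j x y, δ j (x * y) = x * δ j y + δ j x * y)
    (hDadd : ∀ x y, D (x + y) = D x + D y)
    (hDmul : ∀ x y, D (x * y) = x * D y + D x * y)
    (hδcomm : ∀ i j x, δ i (δ j x) = δ j (δ i x))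
    (hDcomm : ∀ j x, D (δ j x) = δ j (D x))
    (I : Ideal (DPoly K (Fin n) (Fin ℓ)))
    (hIdiff : ∀ j, ∀ f ∈ I, polyDeriv δ j f ∈ I)
    (F : Type) [Field F] (φ : K →+* F) (δF : Fin ℓ → F → F)
    (hFadd : ∀ j x y, δF j (x + y) = δF j x + δF j y)
    (hFmul : ∀ j x y, δF j (x * y) = x * δF j y + δF j x * y)
    (hFcomm : ∀ i j x, δF i (δF j x) = δF j (δF i x))
    (hFext : ∀ j c, δF j (φ c) = φ (δ j c))
    (a : Fin n → F) (haV : ∀ f ∈ I, devalAt φ δF a f = 0) :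
    -- "ξ is a local Δ-derivation at a extending D":
    (∀ ξ : DPoly K (Fin n) (Fin ℓ) → F,
      ((∀ f g, ξ (f + g) = ξ f + ξ g)
        ∧ (∀ f g, ξ (f * g) = ξ f * devalAt φ δF a g + devalAt φ δF a f * ξ g)
        ∧ (∀ c, ξ (C c) = φ (D c))
        ∧ (∀ j f, ξ (polyDeriv δ j f) = δF j (ξ f))
        ∧ (∀ f ∈ I, ξ f = 0))
      ↔
      -- ...iff ξ = ξ_b for a (unique) solution b of the linearized system:
      (∃ b : Fin n → F, (∀ f ∈ I, dRelEval φ δF D a b f = 0)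
        ∧ ξ = fun f => dRelEval φ δF D a b f))
    ∧
    -- the mutually inverse correspondences:
    (∀ b : Fin n → F, (∀ f ∈ I, dRelEval φ δF D a b f = 0) →
      (fun i => dRelEval φ δF D a b (X ((i : Fin n), (0 : Theta (Fin ℓ))))) = b)
    ∧
    (∀ ξ : DPoly K (Fin n) (Fin ℓ) → F,
      ((∀ f g, ξ (f + g) = ξ f + ξ g)
        ∧ (∀ f g, ξ (f * g) = ξ f * devalAt φ δF a g + devalAt φ δF a f * ξ g)
        ∧ (∀ c, ξ (C c) = φ (D c))
        ∧ (∀ j f, ξ (polyDeriv δ j f) = δF j (ξ f))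
        ∧ (∀ f ∈ I, ξ f = 0)) →
      (∀ f ∈ I, dRelEval φ δF D a (fun i => ξ (X (i, (0 : Theta (Fin ℓ))))) f = 0)
        ∧ ∀ f, dRelEval φ δF D a (fun i => ξ (X (i, (0 : Theta (Fin ℓ))))) f = ξ f) := by

  have hD0 : D 0 = 0 := deriv_zero_of_add hDadd
  have hD1 : D 1 = 0 := deriv_one_of_mul hDmul
  have hδ0 : ∀ j, δ j 0 = 0 := fun j => deriv_zero_of_add (hδadd j)
  have hδ1 : ∀ j, δ j 1 = 0 := fun j => deriv_one_of_mul (hδmul j)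
  -- the map b ↦ ξ_b has the five properties (vanishing on I given the fibre condition)
  -- main computation: any ξ with the five properties equals ξ_b for b i = ξ (X (i,0))
  have main : ∀ ξ : DPoly K (Fin n) (Fin ℓ) → F,
      (∀ f g, ξ (f + g) = ξ f + ξ g) →
      (∀ f g, ξ (f * g) = ξ f * devalAt φ δF a g + devalAt φ δF a f * ξ g) →
      (∀ c, ξ (C c) = φ (D c)) →
      (∀ j f, ξ (polyDeriv δ j f) = δF j (ξ f)) →
      ∀ f, dRelEval φ δF D a (fun i => ξ (X (i, (0 : Theta (Fin ℓ))))) f = ξ f := by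
    intro ξ hadd hmul hC hpoly f
    set b : Fin n → F := fun i => ξ (X (i, (0 : Theta (Fin ℓ)))) with hb
    have hXθ : ∀ v : DVar (Fin n) (Fin ℓ), ξ (X v) = thetaApply δF v.2 (b v.1) := by
      intro v
      have h1 : (X v : DPoly K (Fin n) (Fin ℓ))
          = thetaApply (polyDeriv δ) v.2 (X (v.1, (0 : Theta (Fin ℓ)))) := by
        rw [thetaApply_polyDeriv_X hδ0 hδ1]
      rw [h1, thetaApply_intertwine ξ (polyDeriv δ) δF (fun j x => hpoly j x) v.2]
    induction f using MvPolynomial.induction_on with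
    | C c => rw [hC, dRelEval_C φ δF a b hD0]
    | add p q hp hq =>
      rw [hadd, dRelEval_add φ δF a b hD0 hDadd, hp, hq]
    | mul_X p v hp =>
      rw [hmul, dRelEval_mul φ δF a b hD0 hDadd hDmul, hp,
        dRelEval_X φ δF a b hD0 hD1, devalAt_X, hXθ v]
  refine ⟨fun ξ => ⟨fun hξ => ?_, fun hξ => ?_⟩, fun b hb => ?_, fun ξ hξ => ?_⟩
  · -- forward direction of the iff
    obtain ⟨hadd, hmul, hC, hpoly, hI0⟩ := hξ
    refine ⟨fun i => ξ (X (i, (0 : Theta (Fin ℓ)))), fun f hf => ?_, ?_⟩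
    · rw [main ξ hadd hmul hC hpoly f]
      exact hI0 f hf
    · funext f
      exact (main ξ hadd hmul hC hpoly f).symm
  · -- reverse direction of the iff
    obtain ⟨b, hb, rfl⟩ := hξ
    exact ⟨fun f g => dRelEval_add φ δF a b hD0 hDadd f g,
      fun f g => dRelEval_mul φ δF a b hD0 hDadd hDmul f g,
      fun c => dRelEval_C φ δF a b hD0 c,
      fun j f => dRelEval_polyDeriv φ δF a b (hδ0 j) (hδ1 j) (hδadd j) (hδmul j)
        hD0 hDadd hDmul (fun c => (hDcomm j c)) (hFadd j) (hFmul j) hFcomm (hFext j) f,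
      hb⟩
  · -- recovering b
    funext i
    rw [dRelEval_X φ δF a b hD0 hD1]
    exact thetaApply_zero δF (b i)
  · -- ξ gives a solution
    obtain ⟨hadd, hmul, hC, hpoly, hI0⟩ := hξ
    refine ⟨fun f hf => ?_, fun f => main ξ hadd hmul hC hpoly f⟩
    rw [main ξ hadd hmul hC hpoly f]
    exact hI0 f hf
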